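/- If I is a nonzero order ideal of (Γ, Γ₊), then I = {(h, g) : h ∈ H, g ∈ p(I)}, where p(I) denotes the image of I under the projection p : Γ → G. In particular, H ⊕ {0} ⊆ I. -/
import Mathlib


/-- The positive cone `Γ₊` on `Γ = H ⊕ G`: elements whose second component lies in
`G₊ \ {0}`, together with `0`. -/
def gammaPos (H : Type*) {G : Type*} (Gpos : Set G) [AddCommGroup H] [AddCommGroup G] :
    Set (H × G) :=
  {x : H × G | x.2 ∈ Gpos ∧ x.2 ≠ 0} ∪ {0}

/-- An order ideal of an ordered abelian group `(A, pos)`: a subgroup `I` with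
`I = (I ∩ pos) − (I ∩ pos)` such that `0 ≤ y ≤ x` and `x ∈ I` imply `y ∈ I`. -/
def IsOrderIdeal {A : Type*} [AddCommGroup A] (pos : Set A) (I : AddSubgroup A) : Prop :=
  (∀ x ∈ I, ∃ a, a ∈ I ∧ a ∈ pos ∧ ∃ b, b ∈ I ∧ b ∈ pos ∧ x = a - b) ∧
  (∀ x y : A, x ∈ I → y ∈ pos → x - y ∈ pos → y ∈ I)

/-- Lemma 3.1(iii): a nonzero order ideal `I` of `(Γ, Γ₊)` satisfies
`I = {(h, g) : h ∈ H, g ∈ p(I)}`; in particular `H ⊕ {0} ⊆ I`. -/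
theorem stmt_3 {H G : Type*} [AddCommGroup H] [AddCommGroup G]
    (Gpos : Set G)
    (hGadd : ∀ a ∈ Gpos, ∀ b ∈ Gpos, a + b ∈ Gpos)
    (hGcap : Gpos ∩ (-Gpos) = {0})
    (I : AddSubgroup (H × G))
    (hI : IsOrderIdeal (gammaPos H Gpos) I)
    (hIne : I ≠ ⊥) :
    (∀ h : H, ((h, 0) : H × G) ∈ I) ∧
    (∀ x : H × G, x ∈ I ↔ x.2 ∈ Prod.snd '' (I : Set (H × G))) := by
  classical
  -- find a ∈ I with a.2 ∈ Gpos and a.2 ≠ 0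
  have hex : ∃ a : H × G, a ∈ I ∧ a.2 ∈ Gpos ∧ a.2 ≠ 0 := by
    obtain ⟨⟨x, hxI⟩, hxne'⟩ := (AddSubgroup.ne_bot_iff_exists_ne_zero).mp hIne
    have hxne : x ≠ 0 := fun h => hxne' (Subtype.ext h)
    obtain ⟨a, haI, haP, b, hbI, hbP, hab⟩ := hI.1 x hxI
    rcases haP with ⟨h1, h2⟩ | ha0
    · exact ⟨a, haI, h1, h2⟩
    · rcases hbP with ⟨h1, h2⟩ | hb0
      · exact ⟨b, hbI, h1, h2⟩
      · exfalso
        apply hxne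
        simp only [Set.mem_singleton_iff] at ha0 hb0
        ext <;> simp [hab, ha0, hb0]
  obtain ⟨a, haI, haG, hane⟩ := hex
  have h2a : (a + a) ∈ I := I.add_mem haI haI
  have h2G : a.2 + a.2 ∈ Gpos := hGadd _ haG _ haG
  have h2ne : a.2 + a.2 ≠ 0 := by
    intro h
    have hmem : a.2 ∈ Gpos ∩ (-Gpos) :=
      ⟨haG, by simpa [Set.mem_neg, neg_eq_of_add_eq_zero_left h] using haG⟩
    rw [hGcap] at hmem
    exact hane hmem
  have key : ∀ h' : H, ((h', a.2) : H × G) ∈ I := by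
    intro h'
    refine hI.2 (a + a) (h', a.2) h2a (Or.inl ⟨haG, hane⟩) (Or.inl ?_)
    constructor
    · simpa using haG
    · simpa using hane
  have hH : ∀ h : H, ((h, 0) : H × G) ∈ I := by
    intro h
    have := I.sub_mem (key h) (key 0)
    simpa using this
  refine ⟨hH, fun x => ⟨fun hx => ⟨x, hx, rfl⟩, ?_⟩⟩
  rintro ⟨y, hyI, hy2⟩
  have hx : x = (x.1 - y.1, 0) + y := by
    ext <;> simp [hy2]
  rw [hx]
  exact I.add_mem (hH _) hyI
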